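/- Let V be a type with distinguished empty value ⊥ and δ : ℕ. Model an interleaved execution on a FIFO queue as a word w : List (Option V), where `some v` denotes pushing v to the tail and `none` denotes popping the head; the initial queue is List.replicate δ ⊥, and a pop records the popped value in an output list. Suppose every prefix of w contains at most δ plus (the number of pushes in that prefix) pops. Then every pop in the execution of w finds a nonempty queue, and the list of popped values produced by executing w equals the first k elements of List.replicate δ ⊥ ++ (the list of pushed values of w, in order), where k is the total number of pops in w. In particular, the sequence of values observed by the receiver depends only on the sequence of pushed values and the number of pops, not on how pushes and pops are interleaved. -/

import Mathlib

/-- One step of a FIFO-queue execution: the state is the pair (queue, popped-values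
output list); `some v` pushes `v` to the tail, `none` pops the head and records it. -/
def fifoStep {V : Type*} [Inhabited V] (st : List V × List V) (a : Option V) :
    List V × List V :=
  match a with
  | some v => (st.1 ++ [v], st.2)
  | none => (st.1.tail, st.2 ++ [st.1.head!])

/-- Executing an interleaved word of pushes and pops on a FIFO queue initially
holding `δ` empty tokens: if every prefix contains at most `δ` plus its number of
pushes many pops, then every pop finds a nonempty queue, and the list of popped
values equals the first `k` elements of the `δ` initial tokens followed by the
pushed values in order, where `k` is the total number of pops. -/

lemma countP_isSome_eq_length_filterMap {V : Type*} (l : List (Option V)) :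
    l.countP (fun a => a.isSome) = (l.filterMap id).length := by
  induction l with
  | nil => simp
  | cons a t ih => cases a <;> simp [List.countP_cons, ih]

theorem fifo_interleaving_confluent {V : Type*} [Inhabited V] (bot : V) (δ : ℕ)
    (w : List (Option V))
    (hadm : ∀ m : ℕ, (w.take m).countP (fun a => a.isNone) ≤
      δ + (w.take m).countP (fun a => a.isSome)) :
    (∀ m : ℕ, w[m]? = some none →
      ((w.take m).foldl fifoStep (List.replicate δ bot, ([] : List V))).1 ≠ []) ∧
    (w.foldl fifoStep (List.replicate δ bot, ([] : List V))).2 =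
      (List.replicate δ bot ++ w.filterMap id).take
        (w.countP (fun a => a.isNone)) := by
  have key : ∀ m : ℕ,
      (w.take m).foldl fifoStep (List.replicate δ bot, ([] : List V)) =
        ((List.replicate δ bot ++ (w.take m).filterMap id).drop
            ((w.take m).countP (fun a => a.isNone)),
         (List.replicate δ bot ++ (w.take m).filterMap id).take
            ((w.take m).countP (fun a => a.isNone))) := by
    intro m
    induction m with
    | zero => simp
    | succ n ih =>
      have hlen : (w.take n).countP (fun a => a.isNone) ≤
          (List.replicate δ bot ++ (w.take n).filterMap id).length := by
        have h1 := hadm n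
        rw [countP_isSome_eq_length_filterMap] at h1
        simpa using h1
      rcases h : w[n]? with _ | a
      · rw [List.take_succ, h]
        simpa using ih
      · rw [List.take_succ, h]
        cases a with
        | some v =>
          have e1 : ((w.take n ++ (some (some v)).toList).filterMap id : List V) =
              (w.take n).filterMap id ++ [v] := by simp
          have e2 : (w.take n ++ (some (some v)).toList).countP (fun a => a.isNone) =
              (w.take n).countP (fun a => a.isNone) := by simp
          have e3 : (w.take n ++ (some (some v)).toList).foldl fifoStep
              (List.replicate δ bot, ([] : List V)) =
              fifoStep ((w.take n).foldl fifoStep (List.replicate δ bot, ([] : List V)))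
                (some v) := by simp
          rw [e1, e2, e3, ih]
          simp only [fifoStep]
          rw [← List.append_assoc, List.drop_append_of_le_length hlen,
            List.take_append_of_le_length hlen]
        | none =>
          have hlt : (w.take n).countP (fun a => a.isNone) <
              (List.replicate δ bot ++ (w.take n).filterMap id).length := by
            have h1 := hadm (n + 1)
            rw [countP_isSome_eq_length_filterMap, List.take_succ, h] at h1
            simp at h1 ⊢
            omega
          have e1 : ((w.take n ++ (some (none : Option V)).toList).filterMap id : List V) =
              (w.take n).filterMap id := by simp
          have e2 : (w.take n ++ (some (none : Option V)).toList).countP (fun a => a.isNone) =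
              (w.take n).countP (fun a => a.isNone) + 1 := by simp
          have e3 : (w.take n ++ (some (none : Option V)).toList).foldl fifoStep
              (List.replicate δ bot, ([] : List V)) =
              fifoStep ((w.take n).foldl fifoStep (List.replicate δ bot, ([] : List V)))
                none := by simp
          rw [e1, e2, e3, ih]
          simp only [fifoStep]
          set L := List.replicate δ bot ++ (w.take n).filterMap id with hL
          set k := (w.take n).countP (fun a => a.isNone) with hk
          have hhead : (L.drop k).head! = L[k] := by
            have h2 : (L.drop k).head? = L[k]? := List.head?_drop
            rw [List.getElem?_eq_getElem hlt] at h2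
            rw [List.head!_eq_head?, h2]
            rfl
          rw [Prod.mk.injEq]
          constructor
          · rw [List.tail_drop]
          · rw [hhead, List.take_succ, List.getElem?_eq_getElem hlt]
            rfl
  constructor
  · intro m hm
    rw [key m]
    have hlt : (w.take m).countP (fun a => a.isNone) <
        (List.replicate δ bot ++ (w.take m).filterMap id).length := by
      have h1 := hadm (m + 1)
      rw [countP_isSome_eq_length_filterMap, List.take_succ, hm] at h1
      simp at h1 ⊢
      omega
    simp only [ne_eq, List.drop_eq_nil_iff]
    omega
  · have h3 := key w.length
    rw [List.take_length] at h3
    rw [h3]
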